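/- Let ψ and φ be pure states on ℂ^d. If there exists a strictly incoherent operation T with T(|φ⟩⟨φ|) = |ψ⟩⟨ψ|, then Δ(ψ) majorizes Δ(φ), i.e., Δ(ψ) ≻ Δ(φ). -/

import Mathlib

namespace Coherence

open Matrix
open scoped BigOperators ComplexOrder

variable {ι κ : Type*} [Fintype ι] [DecidableEq ι] [Fintype κ] [DecidableEq κ]

/-- A density matrix: positive semidefinite with unit trace. -/
def IsDensity (ρ : Matrix ι ι ℂ) : Prop := ρ.PosSemidef ∧ ρ.trace = 1

/-- The dephasing (decohering) map Δ in the fixed (incoherent) basis. -/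
def dephase (ρ : Matrix ι ι ℂ) : Matrix ι ι ℂ := Matrix.diagonal (fun i => ρ i i)

/-- The pure state |v⟩⟨v| associated with a vector `v`. -/
def pureState (v : ι → ℂ) : Matrix ι ι ℂ := Matrix.of fun i j => v i * star (v j)

/-- `v` is a unit vector. -/
def IsUnitVec (v : ι → ℂ) : Prop := ∑ i, ‖v i‖ ^ 2 = 1

/-- An incoherent Kraus operator: each column has at most one nonzero entry,
i.e. `K = ∑ i c(i) |j(i)⟩⟨i|` for a function `j` on basis indices. -/
def IncoherentKraus (K : Matrix κ ι ℂ) : Prop :=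
  ∀ i : ι, ∃ j : κ, ∀ j' : κ, K j' i ≠ 0 → j' = j

/-- A strictly incoherent Kraus operator: `K` and `K†` are both incoherent. -/
def StrictlyIncoherentKraus (K : Matrix κ ι ℂ) : Prop :=
  IncoherentKraus K ∧ IncoherentKraus Kᴴ

/-- An incoherent operation: a cptp map admitting a Kraus representation by
incoherent Kraus operators. -/
def IsIncoherentOp (T : Matrix ι ι ℂ → Matrix κ κ ℂ) : Prop :=
  ∃ (m : ℕ) (K : Fin m → Matrix κ ι ℂ),
    (∀ ℓ, IncoherentKraus (K ℓ)) ∧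
    (∑ ℓ, (K ℓ)ᴴ * K ℓ = 1) ∧
    (∀ ρ, T ρ = ∑ ℓ, K ℓ * ρ * (K ℓ)ᴴ)

/-- A strictly incoherent operation. -/
def IsStrictlyIncoherentOp (T : Matrix ι ι ℂ → Matrix κ κ ℂ) : Prop :=
  ∃ (m : ℕ) (K : Fin m → Matrix κ ι ℂ),
    (∀ ℓ, StrictlyIncoherentKraus (K ℓ)) ∧
    (∑ ℓ, (K ℓ)ᴴ * K ℓ = 1) ∧
    (∀ ρ, T ρ = ∑ ℓ, K ℓ * ρ * (K ℓ)ᴴ)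

/-- Functional calculus for Hermitian matrices (junk value `0` otherwise). -/
noncomputable def matFun (f : ℝ → ℝ) (A : Matrix ι ι ℂ) : Matrix ι ι ℂ :=
  if h : A.IsHermitian then
    (h.eigenvectorUnitary : Matrix ι ι ℂ) *
      Matrix.diagonal (fun i => (f (h.eigenvalues i) : ℂ)) *
      (star (h.eigenvectorUnitary : Matrix ι ι ℂ))
  else 0

/-- Von Neumann entropy `S(ρ) = −tr ρ log₂ ρ` (with the convention 0 log 0 = 0). -/
noncomputable def vN (ρ : Matrix ι ι ℂ) : ℝ :=
  if h : ρ.IsHermitian then -∑ i, h.eigenvalues i * Real.logb 2 (h.eigenvalues i) else 0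

noncomputable def matLog2 (A : Matrix ι ι ℂ) : Matrix ι ι ℂ := matFun (Real.logb 2) A

noncomputable def matSqrt (A : Matrix ι ι ℂ) : Matrix ι ι ℂ := matFun Real.sqrt A

/-- Quantum relative entropy `S(ρ‖σ) = tr ρ (log₂ ρ − log₂ σ)`. -/
noncomputable def relEnt (ρ σ : Matrix ι ι ℂ) : ℝ :=
  ((ρ * (matLog2 ρ - matLog2 σ)).trace).re

/-- Fidelity `F(ρ,σ) = tr √(√ρ σ √ρ)`. -/
noncomputable def fidelity (ρ σ : Matrix ι ι ℂ) : ℝ :=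
  ((matSqrt (matSqrt ρ * σ * matSqrt ρ)).trace).re

/-- Trace norm `‖A‖₁ = tr √(A†A)`. -/
noncomputable def traceNorm (A : Matrix ι ι ℂ) : ℝ :=
  ((matSqrt (Aᴴ * A)).trace).re

/-- Bures distance `B(ρ,σ) = √2 √(1 − F(ρ,σ))`. -/
noncomputable def bures (ρ σ : Matrix ι ι ℂ) : ℝ :=
  Real.sqrt 2 * Real.sqrt (1 - fidelity ρ σ)

/-- Binary entropy function. -/
noncomputable def binEnt (x : ℝ) : ℝ :=
  -(x * Real.logb 2 x) - (1 - x) * Real.logb 2 (1 - x)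

/-- The `n`-fold tensor (Kronecker) power of a matrix, with indices the product basis. -/
def tpow (ρ : Matrix ι ι ℂ) (n : ℕ) : Matrix (Fin n → ι) (Fin n → ι) ℂ :=
  Matrix.of fun i j => ∏ t, ρ (i t) (j t)

/-- The unit (qubit maximally coherent) state Φ₂. -/
noncomputable def Phi2 : Matrix (Fin 2) (Fin 2) ℂ := Matrix.of fun _ _ => (1 / 2 : ℂ)

/-- Relative entropy of coherence `C_r(ρ) = S(Δ(ρ)) − S(ρ)`. -/
noncomputable def Cr (ρ : Matrix ι ι ℂ) : ℝ := vN (dephase ρ) - vN ρ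

/-- Coherence of formation: the least average entropy of coherence over finite
pure-state decompositions of `ρ`. -/
noncomputable def Cf (ρ : Matrix ι ι ℂ) : ℝ :=
  sInf {x | ∃ (m : ℕ) (p : Fin m → ℝ) (v : Fin m → ι → ℂ),
    (∀ k, 0 ≤ p k) ∧ (∀ k, IsUnitVec (v k)) ∧
    ρ = ∑ k, (p k : ℂ) • pureState (v k) ∧
    x = ∑ k, p k * vN (dephase (pureState (v k)))}

/-- `R` is an achievable coherence-distillation rate for `ρ`. -/
def DistillRate {d : ℕ} (ρ : Matrix (Fin d) (Fin d) ℂ) (R : ℝ) : Prop :=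
  0 ≤ R ∧ ∀ ε > 0, ∃ N : ℕ, ∀ n ≥ N,
    ∃ T : Matrix (Fin n → Fin d) (Fin n → Fin d) ℂ →
          Matrix (Fin ⌊(n : ℝ) * R⌋₊ → Fin 2) (Fin ⌊(n : ℝ) * R⌋₊ → Fin 2) ℂ,
      IsIncoherentOp T ∧ 1 - ε ≤ fidelity (T (tpow ρ n)) (tpow Phi2 ⌊(n : ℝ) * R⌋₊)

/-- Distillable coherence. -/
noncomputable def Cd {d : ℕ} (ρ : Matrix (Fin d) (Fin d) ℂ) : ℝ :=
  sSup {R | DistillRate ρ R}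

/-- `R` is an achievable coherence-formation rate for `ρ`. -/
def FormRate {d : ℕ} (ρ : Matrix (Fin d) (Fin d) ℂ) (R : ℝ) : Prop :=
  0 ≤ R ∧ ∀ ε > 0, ∃ N : ℕ, ∀ n ≥ N,
    ∃ T : Matrix (Fin ⌈(n : ℝ) * R⌉₊ → Fin 2) (Fin ⌈(n : ℝ) * R⌉₊ → Fin 2) ℂ →
          Matrix (Fin n → Fin d) (Fin n → Fin d) ℂ,
      IsIncoherentOp T ∧ 1 - ε ≤ fidelity (T (tpow Phi2 ⌈(n : ℝ) * R⌉₊)) (tpow ρ n)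

/-- Coherence cost. -/
noncomputable def Cc {d : ℕ} (ρ : Matrix (Fin d) (Fin d) ℂ) : ℝ :=
  sInf {R | FormRate ρ R}

/-- Sum of the `t` largest entries of the vector `p` (as a sup over size-`t` subsets). -/
noncomputable def sumTop (p : ι → ℝ) (t : ℕ) : ℝ :=
  sSup {x | ∃ A : Finset ι, A.card = t ∧ x = ∑ i ∈ A, p i}

/-- The spectrum of a Hermitian matrix (junk value `0` otherwise). -/
noncomputable def matSpectrum (A : Matrix ι ι ℂ) : ι → ℝ :=
  if h : A.IsHermitian then h.eigenvalues else 0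

/-- `A ≻ B`: the spectrum of `A` majorizes the spectrum of `B`. -/
def MajorizesMat (A B : Matrix ι ι ℂ) : Prop :=
  (∀ t : ℕ, sumTop (matSpectrum B) t ≤ sumTop (matSpectrum A) t) ∧
  ∑ i, matSpectrum A i = ∑ i, matSpectrum B i


section Aux

open Finset Polynomial

omit [DecidableEq ι] in
lemma bddAbove_sumTopSet (p : ι → ℝ) (t : ℕ) :
    BddAbove {x | ∃ A : Finset ι, A.card = t ∧ x = ∑ i ∈ A, p i} := by
  apply Set.Finite.bddAbove
  apply Set.Finite.subset (Set.finite_range (fun A : Finset ι => ∑ i ∈ A, p i))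
  rintro x ⟨A, -, rfl⟩; exact ⟨A, rfl⟩

omit [DecidableEq ι] in
lemma le_sumTop (p : ι → ℝ) (A : Finset ι) : ∑ i ∈ A, p i ≤ sumTop p A.card :=
  le_csSup (bddAbove_sumTopSet p _) ⟨A, rfl, rfl⟩

omit [DecidableEq ι] in
lemma sumTop_le_sumTop (p q : ι → ℝ) (t : ℕ)
    (h : ∀ A : Finset ι, A.card = t → ∑ i ∈ A, q i ≤ sumTop p t) :
    sumTop q t ≤ sumTop p t := by
  by_cases ht : ∃ A : Finset ι, A.card = t
  · obtain ⟨A0, hA0⟩ := ht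
    exact csSup_le ⟨_, A0, hA0, rfl⟩ (by rintro x ⟨B, hB, rfl⟩; exact h B hB)
  · have h1 : {x | ∃ A : Finset ι, A.card = t ∧ x = ∑ i ∈ A, q i} = ∅ := by
      ext x; simp only [Set.mem_setOf_eq, Set.mem_empty_iff_false, iff_false]
      rintro ⟨A, hA, -⟩; exact ht ⟨A, hA⟩
    have h2 : {x | ∃ A : Finset ι, A.card = t ∧ x = ∑ i ∈ A, p i} = ∅ := by
      ext x; simp only [Set.mem_setOf_eq, Set.mem_empty_iff_false, iff_false]
      rintro ⟨A, hA, -⟩; exact ht ⟨A, hA⟩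
    rw [sumTop, sumTop, h1, h2]

lemma sumTop_comp_perm (p : ι → ℝ) (σ : Equiv.Perm ι) (t : ℕ) :
    sumTop (p ∘ σ) t = sumTop p t := by
  have key : ∀ (τ : Equiv.Perm ι) (A : Finset ι),
      ∑ i ∈ A, (p ∘ τ) i = ∑ i ∈ A.image τ, p i := by
    intro τ A
    rw [Finset.sum_image (fun a _ b _ h => τ.injective h)]
    rfl
  unfold sumTop; congr 1; ext x
  constructor
  · rintro ⟨A, hA, rfl⟩
    exact ⟨A.image σ, by rw [Finset.card_image_of_injective _ σ.injective, hA],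
      (key σ A).symm ▸ key σ A⟩
  · rintro ⟨A, hA, rfl⟩
    refine ⟨A.image σ.symm, by rw [Finset.card_image_of_injective _ σ.symm.injective, hA], ?_⟩
    rw [key σ (A.image σ.symm), Finset.image_image]
    congr 1
    simp

lemma exists_perm_comp {β : Type*} (f g : ι → β)
    (h : Finset.univ.val.map f = Finset.univ.val.map g) :
    ∃ σ : Equiv.Perm ι, f ∘ σ = g := by
  classical
  have hcard : ∀ b : β, Fintype.card {i // g i = b} = Fintype.card {i // f i = b} := by
    intro b
    have := congrArg (Multiset.count b) h
    rw [Multiset.count_map, Multiset.count_map] at this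
    rw [Fintype.card_subtype, Fintype.card_subtype]
    have h4 : ∀ (u : ι → β), Multiset.filter (fun a => u a = b) Finset.univ.val
        = Multiset.filter (fun a => b = u a) Finset.univ.val := by
      intro u; apply Multiset.filter_congr; intro a _; exact eq_comm
    rw [Finset.card_def, Finset.card_def, Finset.filter_val, Finset.filter_val, h4 f, h4 g]
    exact this.symm
  let e : ∀ b : β, {i // g i = b} ≃ {i // f i = b} := fun b => Fintype.equivOfCardEq (hcard b)
  refine ⟨((Equiv.sigmaFiberEquiv g).symm.trans
    ((Equiv.sigmaCongrRight e).trans (Equiv.sigmaFiberEquiv f))), ?_⟩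
  funext i
  simp only [Function.comp_apply, Equiv.trans_apply, Equiv.sigmaFiberEquiv,
    Equiv.sigmaCongrRight, Equiv.coe_fn_mk, Equiv.coe_fn_symm_mk]
  exact (e (g i) ⟨i, rfl⟩).2

lemma exists_topset (p : ι → ℝ) :
    ∀ t, t ≤ Fintype.card ι → ∃ B : Finset ι, B.card = t ∧ ∀ j ∈ B, ∀ k, k ∉ B → p k ≤ p j := by
  intro t
  induction t with
  | zero => exact fun _ => ⟨∅, rfl, by simp⟩
  | succ t ih =>
    intro h
    obtain ⟨B, hBcard, hB⟩ := ih (Nat.le_of_succ_le h)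
    have hne : (Bᶜ : Finset ι).Nonempty := by
      rw [← Finset.card_pos, Finset.card_compl, hBcard]
      omega
    obtain ⟨j0, hj0mem, hj0⟩ := Finset.exists_max_image Bᶜ p hne
    have hj0B : j0 ∉ B := Finset.mem_compl.mp hj0mem
    refine ⟨insert j0 B, by rw [Finset.card_insert_of_notMem hj0B, hBcard], ?_⟩
    intro j hj k hk
    have hkB : k ∉ B := fun hh => hk (Finset.mem_insert_of_mem hh)
    rcases Finset.mem_insert.1 hj with rfl | hjB
    · exact hj0 k (Finset.mem_compl.mpr hkB)
    · exact hB j hjB k hkB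

lemma sum_le_sumTop_of_substochastic (D : ι → ι → ℝ) (p q : ι → ℝ)
    (hD0 : ∀ i j, 0 ≤ D i j) (hrow : ∀ i, ∑ j, D i j ≤ 1) (hcol : ∀ j, ∑ i, D i j ≤ 1)
    (hp : ∀ j, 0 ≤ p j) (hq : ∀ i, q i = ∑ j, D i j * p j)
    (A : Finset ι) : ∑ i ∈ A, q i ≤ sumTop p A.card := by
  classical
  set t := A.card with ht
  have htcard : t ≤ Fintype.card ι := by
    rw [ht, ← Finset.card_univ]; exact Finset.card_le_card (Finset.subset_univ A)
  obtain ⟨B, hBcard, hB⟩ := exists_topset p t htcard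
  rcases Nat.eq_zero_or_pos t with h0 | hpos
  · have hA : A = ∅ := Finset.card_eq_zero.mp (by rw [← ht]; exact h0)
    rw [hA]
    simp only [Finset.sum_empty]
    have h1 := le_sumTop p (∅ : Finset ι)
    rw [show t = 0 from h0]
    simpa using h1
  · have hBne : B.Nonempty := Finset.card_pos.mp (hBcard ▸ hpos)
    obtain ⟨j0, hj0B, hj0⟩ := Finset.exists_min_image B p hBne
    set m := p j0 with hm
    have hm0 : 0 ≤ m := hp j0
    set c : ι → ℝ := fun j => ∑ i ∈ A, D i j with hc
    have hc0 : ∀ j, 0 ≤ c j := fun j => Finset.sum_nonneg fun i _ => hD0 i j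
    have hc1 : ∀ j, c j ≤ 1 := fun j =>
      le_trans (Finset.sum_le_sum_of_subset_of_nonneg (Finset.subset_univ A)
        (fun i _ _ => hD0 i j)) (hcol j)
    have hcsum : ∑ j, c j ≤ t := by
      rw [hc]
      rw [Finset.sum_comm]
      calc ∑ i ∈ A, ∑ j, D i j ≤ ∑ i ∈ A, 1 := Finset.sum_le_sum fun i _ => hrow i
        _ = t := by simp [ht]
    have hAq : ∑ i ∈ A, q i = ∑ j, c j * p j := by
      simp only [hq, hc]
      rw [Finset.sum_comm]
      congr 1; ext j; rw [Finset.sum_mul]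
    have hsplit : ∑ j, c j * p j = ∑ j ∈ B, c j * p j + ∑ j ∈ Bᶜ, c j * p j :=
      (Finset.sum_add_sum_compl B _).symm
    have hout : ∑ j ∈ Bᶜ, c j * p j ≤ m * ∑ j ∈ Bᶜ, c j := by
      rw [Finset.mul_sum]
      apply Finset.sum_le_sum
      intro j hj
      calc c j * p j ≤ c j * m := by
            exact mul_le_mul_of_nonneg_left (hB j0 hj0B j (Finset.mem_compl.mp hj)) (hc0 j)
        _ = m * c j := mul_comm _ _
    have houtsum : ∑ j ∈ Bᶜ, c j ≤ t - ∑ j ∈ B, c j := by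
      have := Finset.sum_add_sum_compl B c
      linarith [hcsum]
    have hmain : m * ∑ j ∈ Bᶜ, c j ≤ ∑ j ∈ B, (1 - c j) * p j := by
      calc m * ∑ j ∈ Bᶜ, c j ≤ m * (t - ∑ j ∈ B, c j) := mul_le_mul_of_nonneg_left houtsum hm0
        _ = ∑ j ∈ B, (1 - c j) * m := by
            have h1 : ∑ j ∈ B, (1 - c j) * m = (∑ j ∈ B, ((1:ℝ) - c j)) * m :=
              (Finset.sum_mul _ _ _).symm
            rw [h1, Finset.sum_sub_distrib, Finset.sum_const, hBcard, nsmul_eq_mul, mul_one]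
            ring
        _ ≤ ∑ j ∈ B, (1 - c j) * p j := by
            apply Finset.sum_le_sum
            intro j hj
            exact mul_le_mul_of_nonneg_left (hj0 j hj) (by linarith [hc1 j])
    have hfin : ∑ i ∈ A, q i ≤ ∑ j ∈ B, p j := by
      rw [hAq, hsplit]
      have : ∑ j ∈ B, c j * p j + ∑ j ∈ B, (1 - c j) * p j = ∑ j ∈ B, p j := by
        rw [← Finset.sum_add_distrib]
        congr 1; ext j; ring
      linarith [hout, hmain]
    exact hfin.trans (hBcard ▸ le_sumTop p B)

lemma charpoly_unit_conj {n : ℕ} (U D V : Matrix (Fin n) (Fin n) ℂ)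
    (hUV : U * V = 1) (hVU : V * U = 1) :
    (U * D * V).charpoly = D.charpoly := by
  classical
  let f : ℂ →+* ℂ[X] := Polynomial.C
  have hmap1 : (U.map f) * (V.map f) = 1 := by
    rw [← Matrix.map_mul, hUV, Matrix.map_one f (map_zero f) (map_one f)]
  have hcm : charmatrix (U * D * V) = (U.map f) * charmatrix D * (V.map f) := by
    unfold charmatrix
    rw [Matrix.mul_sub, Matrix.sub_mul]
    congr 1
    · have hcomm := (Matrix.scalar_commute (X:ℂ[X]) (fun r => Commute.all _ _) (U.map f)).eq
      calc Matrix.scalar (Fin n) (X:ℂ[X])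
          = Matrix.scalar (Fin n) (X:ℂ[X]) * ((U.map f) * (V.map f)) := by rw [hmap1, mul_one]
        _ = (Matrix.scalar (Fin n) (X:ℂ[X]) * (U.map f)) * (V.map f) := by rw [mul_assoc]
        _ = (U.map f) * Matrix.scalar (Fin n) (X:ℂ[X]) * (V.map f) := by rw [hcomm]
    · show (U * D * V).map f = _
      rw [Matrix.map_mul, Matrix.map_mul]
      rfl
  rw [Matrix.charpoly, Matrix.charpoly, hcm, Matrix.det_mul, Matrix.det_mul]
  have hdet : (U.map f).det * (V.map f).det = 1 := by
    rw [← Matrix.det_mul, hmap1, Matrix.det_one]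
  calc (U.map f).det * (charmatrix D).det * (V.map f).det
      = (charmatrix D).det * ((U.map f).det * (V.map f).det) := by ring
    _ = (charmatrix D).det := by rw [hdet, mul_one]

lemma charpoly_diagonal_fin {n : ℕ} (c : Fin n → ℂ) :
    (Matrix.diagonal c).charpoly = ∏ i, (X - C (c i)) := by
  rw [Matrix.charpoly_of_upperTriangular _ (Matrix.blockTriangular_diagonal c)]
  simp [Matrix.diagonal_apply_eq]

lemma hermitian_charpoly_eq {n : ℕ} {A : Matrix (Fin n) (Fin n) ℂ} (h : A.IsHermitian) :
    A.charpoly = ∏ i, (X - C (h.eigenvalues i : ℂ)) := by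
  have hst := Matrix.IsHermitian.spectral_theorem h
  have h1 : star (h.eigenvectorUnitary : Matrix (Fin n) (Fin n) ℂ) *
      (h.eigenvectorUnitary : Matrix (Fin n) (Fin n) ℂ) = 1 :=
    (Unitary.mem_iff.mp h.eigenvectorUnitary.prop).1
  have h2 : (h.eigenvectorUnitary : Matrix (Fin n) (Fin n) ℂ) *
      star (h.eigenvectorUnitary : Matrix (Fin n) (Fin n) ℂ) = 1 :=
    (Unitary.mem_iff.mp h.eigenvectorUnitary.prop).2
  conv_lhs => rw [hst, Unitary.conjStarAlgAut_apply]
  rw [charpoly_unit_conj _ _ _ h2 h1, charpoly_diagonal_fin]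
  rfl

lemma eig_diagonal_multiset {n : ℕ} (r : Fin n → ℝ)
    (h : (Matrix.diagonal (fun i => (r i : ℂ))).IsHermitian) :
    Finset.univ.val.map h.eigenvalues = Finset.univ.val.map r := by
  have e1 := hermitian_charpoly_eq h
  have e2 := charpoly_diagonal_fin (fun i => (r i : ℂ))
  have key : ∏ i, (X - C ((r i : ℂ))) = ∏ i, (X - C ((h.eigenvalues i : ℝ) : ℂ)) := by
    rw [← e2, e1]
  have hr : ∀ (f : Fin n → ℂ), (∏ i, (X - C (f i)))
      = ((Finset.univ.val.map f).map fun a => X - C a).prod := by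
    intro f
    rw [Finset.prod_eq_multiset_prod, Multiset.map_map]
    rfl
  have hroots := congrArg Polynomial.roots key
  rw [hr, hr, Polynomial.roots_multiset_prod_X_sub_C, Polynomial.roots_multiset_prod_X_sub_C]
    at hroots
  have hmap : Multiset.map (Complex.ofReal) (Finset.univ.val.map r)
      = Multiset.map (Complex.ofReal) (Finset.univ.val.map h.eigenvalues) := by
    rw [Multiset.map_map, Multiset.map_map]
    exact hroots
  exact (Multiset.map_injective Complex.ofReal_injective hmap).symm

lemma mul_star_self_eq (z : ℂ) : z * star z = ((‖z‖^2 : ℝ) : ℂ) := by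
  rw [Complex.star_def, Complex.mul_conj, ← Complex.sq_norm]

lemma unitvec_complex {κ' : Type*} [Fintype κ'] {w : κ' → ℂ} (hw : IsUnitVec w) :
    ∑ i, w i * star (w i) = (1 : ℂ) := by
  have h1 : ∑ i, w i * star (w i) = ∑ i, ((‖w i‖^2 : ℝ) : ℂ) :=
    Finset.sum_congr rfl fun i _ => mul_star_self_eq (w i)
  rw [h1, ← Complex.ofReal_sum, hw, Complex.ofReal_one]

lemma rank_one_decomp {n m : ℕ} (w : Fin n → ℂ) (hw : IsUnitVec w)
    (u : Fin m → Fin n → ℂ)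
    (h : ∀ i j, ∑ ℓ, u ℓ i * star (u ℓ j) = w i * star (w j)) :
    (∀ ℓ i, u ℓ i = (∑ j, star (w j) * u ℓ j) * w i) ∧
    (∑ ℓ, ‖∑ j, star (w j) * u ℓ j‖^2 = 1) := by
  set c : Fin m → ℂ := fun ℓ => ∑ j, star (w j) * u ℓ j with hc
  have hW : ∑ i, w i * star (w i) = (1 : ℂ) := unitvec_complex hw
  have hcu : ∀ ℓ, ∑ i, u ℓ i * star (w i) = c ℓ := by
    intro ℓ; rw [hc]; exact Finset.sum_congr rfl fun i _ => mul_comm _ _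
  have hcs : ∀ ℓ, ∑ i, w i * star (u ℓ i) = star (c ℓ) := by
    intro ℓ
    rw [hc, star_sum]
    exact Finset.sum_congr rfl fun i _ => by rw [star_mul', star_star]
  have hcsum : ∑ ℓ, c ℓ * star (c ℓ) = 1 := by
    have expand : ∀ ℓ, c ℓ * star (c ℓ)
        = ∑ j, ∑ k, star (w j) * w k * (u ℓ j * star (u ℓ k)) := by
      intro ℓ
      rw [hc, star_sum, Finset.sum_mul_sum]
      refine Finset.sum_congr rfl fun j _ => Finset.sum_congr rfl fun k _ => ?_
      rw [star_mul', star_star]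
      ring
    calc ∑ ℓ, c ℓ * star (c ℓ)
        = ∑ ℓ, ∑ j, ∑ k, star (w j) * w k * (u ℓ j * star (u ℓ k)) :=
          Finset.sum_congr rfl fun ℓ _ => expand ℓ
      _ = ∑ j, ∑ k, star (w j) * w k * (∑ ℓ, u ℓ j * star (u ℓ k)) := by
          rw [Finset.sum_comm]
          refine Finset.sum_congr rfl fun j _ => ?_
          rw [Finset.sum_comm]
          refine Finset.sum_congr rfl fun k _ => ?_
          rw [Finset.mul_sum]
      _ = ∑ j, ∑ k, star (w j) * w k * (w j * star (w k)) :=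
          Finset.sum_congr rfl fun j _ => Finset.sum_congr rfl fun k _ => by rw [h j k]
      _ = (∑ j, w j * star (w j)) * (∑ k, w k * star (w k)) := by
          rw [Finset.sum_mul_sum]
          exact Finset.sum_congr rfl fun j _ => Finset.sum_congr rfl fun k _ => by ring
      _ = 1 := by rw [hW]; norm_num
  have husum : ∑ ℓ, ∑ i, u ℓ i * star (u ℓ i) = 1 := by
    rw [Finset.sum_comm]
    calc ∑ i, ∑ ℓ, u ℓ i * star (u ℓ i) = ∑ i, w i * star (w i) :=
          Finset.sum_congr rfl fun i _ => h i i
      _ = 1 := hW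
  have key : ∑ ℓ, ∑ i, (u ℓ i - c ℓ * w i) * star (u ℓ i - c ℓ * w i) = 0 := by
    have perℓ : ∀ ℓ, ∑ i, (u ℓ i - c ℓ * w i) * star (u ℓ i - c ℓ * w i)
        = (∑ i, u ℓ i * star (u ℓ i)) - c ℓ * star (c ℓ) := by
      intro ℓ
      have e : ∀ i, (u ℓ i - c ℓ * w i) * star (u ℓ i - c ℓ * w i)
          = u ℓ i * star (u ℓ i) - star (c ℓ) * (u ℓ i * star (w i))
            - c ℓ * (w i * star (u ℓ i)) + (c ℓ * star (c ℓ)) * (w i * star (w i)) := by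
        intro i
        simp only [star_sub, star_mul', star_star]
        ring
      rw [Finset.sum_congr rfl (fun i _ => e i), Finset.sum_add_distrib,
        Finset.sum_sub_distrib, Finset.sum_sub_distrib,
        ← Finset.mul_sum, ← Finset.mul_sum, ← Finset.mul_sum, hcu, hcs, hW]
      ring
    rw [Finset.sum_congr rfl (fun ℓ _ => perℓ ℓ), Finset.sum_sub_distrib, husum, hcsum, sub_self]
  have keyR : ∑ ℓ, ∑ i, ‖u ℓ i - c ℓ * w i‖^2 = 0 := by
    have hC : ((∑ ℓ, ∑ i, ‖u ℓ i - c ℓ * w i‖^2 : ℝ) : ℂ)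
        = ∑ ℓ, ∑ i, (u ℓ i - c ℓ * w i) * star (u ℓ i - c ℓ * w i) := by
      rw [Complex.ofReal_sum]
      refine Finset.sum_congr rfl fun ℓ _ => ?_
      rw [Complex.ofReal_sum]
      exact Finset.sum_congr rfl fun i _ => (mul_star_self_eq _).symm
    rw [key] at hC
    exact_mod_cast hC
  have hz : ∀ ℓ i, u ℓ i = c ℓ * w i := by
    intro ℓ i
    have h1 : ∀ ℓ' ∈ Finset.univ (α := Fin m), (0:ℝ) ≤ ∑ i, ‖u ℓ' i - c ℓ' * w i‖^2 :=
      fun ℓ' _ => Finset.sum_nonneg fun i _ => sq_nonneg _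
    have h2 := (Finset.sum_eq_zero_iff_of_nonneg h1).mp keyR ℓ (Finset.mem_univ ℓ)
    have h3 : ∀ i' ∈ Finset.univ (α := Fin n), (0:ℝ) ≤ ‖u ℓ i' - c ℓ * w i'‖^2 :=
      fun i' _ => sq_nonneg _
    have h4 := (Finset.sum_eq_zero_iff_of_nonneg h3).mp h2 i (Finset.mem_univ i)
    have h5 : ‖u ℓ i - c ℓ * w i‖ = 0 := sq_eq_zero_iff.mp h4
    rw [norm_eq_zero] at h5
    exact sub_eq_zero.mp h5
  refine ⟨fun ℓ i => hz ℓ i, ?_⟩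
  have hfin : ((∑ ℓ, ‖c ℓ‖^2 : ℝ) : ℂ) = 1 := by
    rw [Complex.ofReal_sum, ← hcsum]
    exact Finset.sum_congr rfl fun ℓ _ => (mul_star_self_eq _).symm
  exact_mod_cast hfin

lemma spectrum_diagonal_real {n : ℕ} (r : Fin n → ℝ) :
    ∃ σ : Equiv.Perm (Fin n),
      (matSpectrum (Matrix.diagonal (fun i => ((r i : ℝ) : ℂ)))) ∘ σ = r := by
  have hherm : (Matrix.diagonal (fun i => ((r i : ℝ) : ℂ))).IsHermitian := by
    rw [Matrix.IsHermitian, Matrix.diagonal_conjTranspose]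
    have hst : (star fun i => ((r i : ℝ) : ℂ)) = fun i => ((r i : ℝ) : ℂ) := by
      funext i
      simp only [Pi.star_apply, Complex.star_def, Complex.conj_ofReal]
    rw [hst]
  have hms : matSpectrum (Matrix.diagonal (fun i => ((r i : ℝ) : ℂ))) = hherm.eigenvalues := by
    rw [matSpectrum, dif_pos hherm]
  have hmul : Finset.univ.val.map
      (matSpectrum (Matrix.diagonal (fun i => ((r i : ℝ) : ℂ)))) = Finset.univ.val.map r := by
    rw [hms]
    exact eig_diagonal_multiset r hherm
  exact exists_perm_comp _ r hmul

end Aux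

/-- If a strictly incoherent operation transforms the pure state `φ`
into the pure state `ψ`, then `Δ(ψ) ≻ Δ(φ)`. -/
theorem strictIC_implies_majorization {d : ℕ} (v w : Fin d → ℂ)
    (hv : IsUnitVec v) (hw : IsUnitVec w)
    (T : Matrix (Fin d) (Fin d) ℂ → Matrix (Fin d) (Fin d) ℂ)
    (hT : IsStrictlyIncoherentOp T) (hTv : T (pureState v) = pureState w) :
    MajorizesMat (dephase (pureState w)) (dephase (pureState v)) := by
  classical
  obtain ⟨m, K, hK, hTP, hrep⟩ := hT
  rw [hrep] at hTv
  set u : Fin m → Fin d → ℂ := fun ℓ i => ∑ a, K ℓ i a * v a with hudef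
  have hentry : ∀ i j, ∑ ℓ, u ℓ i * star (u ℓ j) = w i * star (w j) := by
    intro i j
    have h0 : (∑ ℓ, K ℓ * pureState v * (K ℓ)ᴴ) i j = pureState w i j := by rw [hTv]
    rw [Matrix.sum_apply] at h0
    have h1 : ∀ ℓ, (K ℓ * pureState v * (K ℓ)ᴴ) i j = u ℓ i * star (u ℓ j) := by
      intro ℓ
      have lhs_eq : (K ℓ * pureState v * (K ℓ)ᴴ) i j
          = ∑ b, ∑ a, K ℓ i a * v a * (star (K ℓ j b) * star (v b)) := by
        simp only [Matrix.mul_apply, Matrix.conjTranspose_apply, pureState, Matrix.of_apply,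
          Finset.sum_mul]
        refine Finset.sum_congr rfl fun b _ => Finset.sum_congr rfl fun a _ => by ring
      have rhs_eq : u ℓ i * star (u ℓ j)
          = ∑ a, ∑ b, K ℓ i a * v a * (star (K ℓ j b) * star (v b)) := by
        rw [show u ℓ i = ∑ a, K ℓ i a * v a from rfl,
          show u ℓ j = ∑ b, K ℓ j b * v b from rfl, star_sum, Finset.sum_mul_sum]
        refine Finset.sum_congr rfl fun a _ => Finset.sum_congr rfl fun b _ => ?_
        rw [star_mul']
      rw [lhs_eq, rhs_eq, Finset.sum_comm]
    calc ∑ ℓ, u ℓ i * star (u ℓ j) = ∑ ℓ, (K ℓ * pureState v * (K ℓ)ᴴ) i j :=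
        Finset.sum_congr rfl fun ℓ _ => (h1 ℓ).symm
      _ = pureState w i j := h0
      _ = w i * star (w j) := rfl
  obtain ⟨hu, hcnorm⟩ := rank_one_decomp w hw u hentry
  set c : Fin m → ℂ := fun ℓ => ∑ j, star (w j) * u ℓ j with hcdef
  have hKv : ∀ ℓ j i, K ℓ j i ≠ 0 → K ℓ j i * v i = c ℓ * w j := by
    intro ℓ j i hne
    obtain ⟨i0, hi0⟩ := (hK ℓ).2 j
    have hii0 : i = i0 := hi0 i (by
      simp only [Matrix.conjTranspose_apply]
      exact star_ne_zero.mpr hne)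
    have hsum : u ℓ j = K ℓ j i * v i := by
      rw [show u ℓ j = ∑ a, K ℓ j a * v a from rfl]
      apply Finset.sum_eq_single i
      · intro b _ hbi
        have hb0 : K ℓ j b = 0 := by
          by_contra hb
          exact hbi ((hi0 b (by
            simp only [Matrix.conjTranspose_apply]
            exact star_ne_zero.mpr hb)).trans hii0.symm)
        rw [hb0, zero_mul]
      · intro habs; exact absurd (Finset.mem_univ i) habs
    rw [← hsum, hu ℓ j]
  have hKnorm : ∀ ℓ j i, K ℓ j i ≠ 0 → ‖K ℓ j i‖^2 * ‖v i‖^2 = ‖c ℓ‖^2 * ‖w j‖^2 := by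
    intro ℓ j i hne
    have := congrArg (fun z : ℂ => ‖z‖^2) (hKv ℓ j i hne)
    simpa [norm_mul, mul_pow] using this
  have hTPentry : ∀ i, ∑ ℓ, ∑ j, ‖K ℓ j i‖^2 = 1 := by
    intro i
    have h0 : (∑ ℓ, (K ℓ)ᴴ * K ℓ) i i = (1 : Matrix (Fin d) (Fin d) ℂ) i i := by rw [hTP]
    rw [Matrix.sum_apply] at h0
    simp only [Matrix.mul_apply, Matrix.conjTranspose_apply, Matrix.one_apply_eq] at h0
    have h1 : ((∑ ℓ, ∑ j, ‖K ℓ j i‖^2 : ℝ) : ℂ) = 1 := by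
      rw [Complex.ofReal_sum, ← h0]
      refine Finset.sum_congr rfl fun ℓ _ => ?_
      rw [Complex.ofReal_sum]
      refine Finset.sum_congr rfl fun j _ => ?_
      exact ((mul_comm (star (K ℓ j i)) (K ℓ j i)).trans (mul_star_self_eq _)).symm
    exact_mod_cast h1
  set D : Fin d → Fin d → ℝ := fun i j => ∑ ℓ, if K ℓ j i = 0 then 0 else ‖c ℓ‖^2 with hD
  have hD0 : ∀ i j, 0 ≤ D i j := by
    intro i j
    refine Finset.sum_nonneg fun ℓ _ => ?_
    split
    · exact le_refl 0
    · positivity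
  have hrowD : ∀ i, ∑ j, D i j ≤ 1 := by
    intro i
    rw [show ∑ j, D i j = ∑ ℓ, ∑ j, if K ℓ j i = 0 then (0:ℝ) else ‖c ℓ‖^2 from Finset.sum_comm]
    calc ∑ ℓ, ∑ j, (if K ℓ j i = 0 then (0:ℝ) else ‖c ℓ‖^2) ≤ ∑ ℓ, ‖c ℓ‖^2 := by
          apply Finset.sum_le_sum
          intro ℓ _
          obtain ⟨j0, hj0⟩ := (hK ℓ).1 i
          calc ∑ j, (if K ℓ j i = 0 then (0:ℝ) else ‖c ℓ‖^2)
              ≤ ∑ j, (if j = j0 then ‖c ℓ‖^2 else 0) := by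
                apply Finset.sum_le_sum
                intro j _
                by_cases hz : K ℓ j i = 0
                · rw [if_pos hz]
                  split
                  · positivity
                  · exact le_refl 0
                · rw [if_neg hz, if_pos (hj0 j hz)]
            _ = ‖c ℓ‖^2 := by rw [Finset.sum_ite_eq' Finset.univ j0]; simp
      _ = 1 := hcnorm
  have hcolD : ∀ j, ∑ i, D i j ≤ 1 := by
    intro j
    calc ∑ i, D i j ≤ ∑ ℓ, ‖c ℓ‖^2 := by
          rw [show ∑ i, D i j = ∑ ℓ, ∑ i, if K ℓ j i = 0 then (0:ℝ) else ‖c ℓ‖^2 from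
            Finset.sum_comm]
          apply Finset.sum_le_sum
          intro ℓ _
          obtain ⟨i0, hi0⟩ := (hK ℓ).2 j
          have hi0' : ∀ i', K ℓ j i' ≠ 0 → i' = i0 := fun i' hne =>
            hi0 i' (by
              simp only [Matrix.conjTranspose_apply]
              exact star_ne_zero.mpr hne)
          calc ∑ i, (if K ℓ j i = 0 then (0:ℝ) else ‖c ℓ‖^2)
              ≤ ∑ i, (if i = i0 then ‖c ℓ‖^2 else 0) := by
                apply Finset.sum_le_sum
                intro i _
                by_cases hz : K ℓ j i = 0
                · rw [if_pos hz]
                  split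
                  · positivity
                  · exact le_refl 0
                · rw [if_neg hz, if_pos (hi0' i hz)]
            _ = ‖c ℓ‖^2 := by rw [Finset.sum_ite_eq' Finset.univ i0]; simp
      _ = 1 := hcnorm
  have hq : ∀ i, ‖v i‖^2 = ∑ j, D i j * ‖w j‖^2 := by
    intro i
    symm
    calc ∑ j, D i j * ‖w j‖^2
        = ∑ j, ∑ ℓ, (if K ℓ j i = 0 then (0:ℝ) else ‖c ℓ‖^2) * ‖w j‖^2 :=
          Finset.sum_congr rfl fun j _ => Finset.sum_mul _ _ _
      _ = ∑ ℓ, ∑ j, (if K ℓ j i = 0 then (0:ℝ) else ‖c ℓ‖^2) * ‖w j‖^2 := Finset.sum_comm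
      _ = ∑ ℓ, ∑ j, ‖K ℓ j i‖^2 * ‖v i‖^2 := by
          refine Finset.sum_congr rfl fun ℓ _ => Finset.sum_congr rfl fun j _ => ?_
          by_cases hz : K ℓ j i = 0
          · rw [if_pos hz, hz]
            simp
          · rw [if_neg hz, hKnorm ℓ j i hz]
      _ = (∑ ℓ, ∑ j, ‖K ℓ j i‖^2) * ‖v i‖^2 := by
          rw [Finset.sum_mul]
          exact Finset.sum_congr rfl fun ℓ _ => (Finset.sum_mul _ _ _).symm
      _ = ‖v i‖^2 := by rw [hTPentry i, one_mul]
  have hdw : dephase (pureState w) = Matrix.diagonal (fun i => ((‖w i‖^2 : ℝ) : ℂ)) :=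
    congrArg Matrix.diagonal (funext fun i => mul_star_self_eq (w i))
  have hdv : dephase (pureState v) = Matrix.diagonal (fun i => ((‖v i‖^2 : ℝ) : ℂ)) :=
    congrArg Matrix.diagonal (funext fun i => mul_star_self_eq (v i))
  obtain ⟨σw, hσw⟩ := spectrum_diagonal_real (fun i => ‖w i‖^2)
  obtain ⟨σv, hσv⟩ := spectrum_diagonal_real (fun i => ‖v i‖^2)
  rw [MajorizesMat, hdw, hdv]
  constructor
  · intro t
    have ew : sumTop (fun i => ‖w i‖^2) t
        = sumTop (matSpectrum (Matrix.diagonal (fun i => ((‖w i‖^2 : ℝ) : ℂ)))) t := by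
      rw [← hσw]
      exact sumTop_comp_perm _ σw t
    have ev : sumTop (fun i => ‖v i‖^2) t
        = sumTop (matSpectrum (Matrix.diagonal (fun i => ((‖v i‖^2 : ℝ) : ℂ)))) t := by
      rw [← hσv]
      exact sumTop_comp_perm _ σv t
    rw [← ew, ← ev]
    apply sumTop_le_sumTop
    intro A hA
    have := sum_le_sumTop_of_substochastic D (fun i => ‖w i‖^2) (fun i => ‖v i‖^2)
      hD0 hrowD hcolD (fun j => sq_nonneg _) hq A
    rw [hA] at this
    exact this
  · have sw : ∑ i, matSpectrum (Matrix.diagonal (fun i => ((‖w i‖^2 : ℝ) : ℂ))) i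
        = ∑ i, ‖w i‖^2 := by
      rw [← Equiv.sum_comp σw (matSpectrum (Matrix.diagonal (fun i => ((‖w i‖^2 : ℝ) : ℂ))))]
      exact Finset.sum_congr rfl fun i _ => congrFun hσw i
    have sv : ∑ i, matSpectrum (Matrix.diagonal (fun i => ((‖v i‖^2 : ℝ) : ℂ))) i
        = ∑ i, ‖v i‖^2 := by
      rw [← Equiv.sum_comp σv (matSpectrum (Matrix.diagonal (fun i => ((‖v i‖^2 : ℝ) : ℂ))))]
      exact Finset.sum_congr rfl fun i _ => congrFun hσv i
    rw [sw, sv, hw, hv]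

end Coherence
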